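/- For all real numbers Ω, A, B, C, D, the vorticity function ω(θ,φ) = Ω·cosθ + A·Y_{2,0} + B·Y_{2,1} + C·Y_{2,−1} + D·Y_{2,2} satisfies ∫_{S²} ω³ dS = (10A³ + 15√3·(B − C)(B + C)·D + 15A·(B² + C² − 2D²) + 56A·Ω²·π) / (14√(5π)). -/

import Mathlib

open Real

/-- The vorticity `Ω cosθ + A Y_{2,0} + B Y_{2,1} + C Y_{2,−1} + D Y_{2,2}`
in spherical coordinates. -/
noncomputable def vort (Ω A B C D θ φ : ℝ) : ℝ :=
  Ω * Real.cos θ +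
  A * (Real.sqrt (5 / (16 * π)) * (3 * (Real.cos θ) ^ 2 - 1)) +
  B * (Real.sqrt (15 / (16 * π)) * Real.sin (2 * θ) * Real.cos φ) +
  C * (Real.sqrt (15 / (16 * π)) * Real.sin (2 * θ) * Real.sin φ) +
  D * (Real.sqrt (15 / (16 * π)) * (Real.sin θ) ^ 2 * Real.cos (2 * φ))

lemma inner_int (p q r u : ℝ) :
    (∫ x in (0 : ℝ)..(π), (p * Real.cos x ^ 2 + q * Real.cos x + r + u * Real.sin x * Real.cos x) ^ 3 * Real.sin x)
      = ((4 : ℝ)/5) * r * u ^ 2 + (2 : ℝ) * r ^ 3 + ((3 : ℝ)/4) * q * r * u * π + (2 : ℝ) * q ^ 2 * r + ((12 : ℝ)/35) * p * u ^ 2 + (2 : ℝ) * p * r ^ 2 + ((3 : ℝ)/8) * p * q * u * π + ((6 : ℝ)/5) * p * q ^ 2 + ((6 : ℝ)/5) * p ^ 2 * r + ((2 : ℝ)/7) * p ^ 3 := by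
  have hd : ∀ x ∈ Set.uIcc (0 : ℝ) (π),
      HasDerivAt (fun x => ((-1 : ℝ) * r ^ 3) * (Real.cos x) + (((-3 : ℝ)/2) * q * r ^ 2) * (Real.cos x ^ 2) + ((-1 : ℝ) * r * u ^ 2 + (-1 : ℝ) * q ^ 2 * r + (-1 : ℝ) * p * r ^ 2) * (Real.cos x ^ 3) + (((-3 : ℝ)/4) * q * u ^ 2 + ((-1 : ℝ)/4) * q ^ 3 + ((-3 : ℝ)/2) * p * q * r) * (Real.cos x ^ 4) + (((3 : ℝ)/5) * r * u ^ 2 + ((-3 : ℝ)/5) * p * u ^ 2 + ((-3 : ℝ)/5) * p * q ^ 2 + ((-3 : ℝ)/5) * p ^ 2 * r) * (Real.cos x ^ 5) + (((1 : ℝ)/2) * q * u ^ 2 + ((-1 : ℝ)/2) * p ^ 2 * q) * (Real.cos x ^ 6) + (((3 : ℝ)/7) * p * u ^ 2 + ((-1 : ℝ)/7) * p ^ 3) * (Real.cos x ^ 7) + (((2 : ℝ)/35) * u ^ 3 + (1 : ℝ) * r ^ 2 * u + ((2 : ℝ)/5) * q ^ 2 * u + ((4 : ℝ)/5) * p * r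 * u + ((8 : ℝ)/35) * p ^ 2 * u) * (Real.sin x) + (((3 : ℝ)/4) * q * r * u + ((3 : ℝ)/8) * p * q * u) * (Real.sin x * Real.cos x) + (((1 : ℝ)/35) * u ^ 3 + (-1 : ℝ) * r ^ 2 * u + ((1 : ℝ)/5) * q ^ 2 * u + ((2 : ℝ)/5) * p * r * u + ((4 : ℝ)/35) * p ^ 2 * u) * (Real.sin x * Real.cos x ^ 2) + (((-3 : ℝ)/2) * q * r * u + ((1 : ℝ)/4) * p * q * u) * (Real.sin x * Real.cos x ^ 3) + (((-8 : ℝ)/35) * u ^ 3 + ((-3 : ℝ)/5) * q ^ 2 * u + ((-6 : ℝ)/5) * p * r * u + ((3 : ℝ)/35) * p ^ 2 * u) * (Real.sin x * Real.cos x ^ 4) + ((-1 : ℝ) * p * q * u) * (Real.sin x * Real.cos x ^ 5) + (((1 : ℝ)/7) * u ^ 3 + ((-3 : ℝ)/7) * p ^ 2 * u) * (Real.sin x * Real.cos x ^ 6) + (((3 : ℝ)/4) * q * r * u + ((3 : ℝ)/8) * p * q * u) * (x))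
        ((p * Real.cos x ^ 2 + q * Real.cos x + r + u * Real.sin x * Real.cos x) ^ 3 * Real.sin x) x := by
    intro x _
    have h0 := ((((((((((((((((Real.hasDerivAt_cos x).const_mul ((-1 : ℝ) * r ^ 3)).add (((Real.hasDerivAt_cos x).pow 2).const_mul (((-3 : ℝ)/2) * q * r ^ 2))).add (((Real.hasDerivAt_cos x).pow 3).const_mul ((-1 : ℝ) * r * u ^ 2 + (-1 : ℝ) * q ^ 2 * r + (-1 : ℝ) * p * r ^ 2))).add (((Real.hasDerivAt_cos x).pow 4).const_mul (((-3 : ℝ)/4) * q * u ^ 2 + ((-1 : ℝ)/4) * q ^ 3 + ((-3 : ℝ)/2) * p * q * r))).add (((Real.hasDerivAt_cos x).pow 5).const_mul (((3 : ℝ)/5) * r * u ^ 2 + ((-3 : ℝ)/5) * p * u ^ 2 + ((-3 : ℝ)/5) * p * q ^ 2 + ((-3 : ℝ)/5) * p ^ 2 * r))).add (((Real.hasDerivAt_cos x).pow 6).const_mul (((1 : ℝ)/2) * q * u ^ 2 + ((-1 : ℝ)/2) * p ^ 2 * q))).add (((Real.hasDerivAt_cos x).pow 7).const_mul (((3 :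 ℝ)/7) * p * u ^ 2 + ((-1 : ℝ)/7) * p ^ 3))).add ((Real.hasDerivAt_sin x).const_mul (((2 : ℝ)/35) * u ^ 3 + (1 : ℝ) * r ^ 2 * u + ((2 : ℝ)/5) * q ^ 2 * u + ((4 : ℝ)/5) * p * r * u + ((8 : ℝ)/35) * p ^ 2 * u))).add (((Real.hasDerivAt_sin x).mul (Real.hasDerivAt_cos x)).const_mul (((3 : ℝ)/4) * q * r * u + ((3 : ℝ)/8) * p * q * u))).add (((Real.hasDerivAt_sin x).mul ((Real.hasDerivAt_cos x).pow 2)).const_mul (((1 : ℝ)/35) * u ^ 3 + (-1 : ℝ) * r ^ 2 * u + ((1 : ℝ)/5) * q ^ 2 * u + ((2 : ℝ)/5) * p * r * u + ((4 : ℝ)/35) * p ^ 2 * u))).add (((Real.hasDerivAt_sin x).mul ((Real.hasDerivAt_cos x).pow 3)).const_mul (((-3 : ℝ)/2) * q * r * u + ((1 : ℝ)/4) * p * q * u))).add (((Real.hasDerivAt_sin x).mul ((Real.hasDerivAt_cos x).pow 4)).const_mul (((-8 : ℝ)/35) * u ^ 3 + ((-3 : ℝ)/5) * q ^ 2 * u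 + ((-6 : ℝ)/5) * p * r * u + ((3 : ℝ)/35) * p ^ 2 * u))).add (((Real.hasDerivAt_sin x).mul ((Real.hasDerivAt_cos x).pow 5)).const_mul ((-1 : ℝ) * p * q * u))).add (((Real.hasDerivAt_sin x).mul ((Real.hasDerivAt_cos x).pow 6)).const_mul (((1 : ℝ)/7) * u ^ 3 + ((-3 : ℝ)/7) * p ^ 2 * u))).add ((hasDerivAt_id x).const_mul (((3 : ℝ)/4) * q * r * u + ((3 : ℝ)/8) * p * q * u)))
    refine HasDerivAt.congr_deriv h0 (Eq.symm ?_)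
    push_cast [Pi.pow_apply]
    linear_combination (((2 : ℝ)/35) * u ^ 3 * Real.cos x + ((3 : ℝ)/35) * u ^ 3 * Real.cos x ^ 3 + ((-1 : ℝ)/7) * u ^ 3 * Real.cos x ^ 5 + (1 : ℝ) * u ^ 3 * Real.sin x ^ 2 * Real.cos x ^ 3 + (3 : ℝ) * r * u ^ 2 * Real.sin x * Real.cos x ^ 2 + (1 : ℝ) * r ^ 2 * u * Real.cos x + (3 : ℝ) * q * u ^ 2 * Real.sin x * Real.cos x ^ 3 + ((3 : ℝ)/4) * q * r * u + ((3 : ℝ)/2) * q * r * u * Real.cos x ^ 2 + ((2 : ℝ)/5) * q ^ 2 * u * Real.cos x + ((3 : ℝ)/5) * q ^ 2 * u * Real.cos x ^ 3 + (3 : ℝ) * p * u ^ 2 * Real.sin x * Real.cos x ^ 4 + ((4 : ℝ)/5) * p * r * u * Real.cos x + ((6 : ℝ)/5) * p * r * u * Real.cos x ^ 3 + ((3 : ℝ)/8) * p * q * u + ((3 : ℝ)/4) * p * q * u * Real.cos x ^ 2 + (1 : ℝ) * p * q * u * Real.cos x ^ 4 + ((8 : ℝ)/35) * p ^ 2 *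 u * Real.cos x + ((12 : ℝ)/35) * p ^ 2 * u * Real.cos x ^ 3 + ((3 : ℝ)/7) * p ^ 2 * u * Real.cos x ^ 5) * Real.sin_sq_add_cos_sq x
  rw [intervalIntegral.integral_eq_sub_of_hasDerivAt hd (Continuous.intervalIntegrable (by fun_prop) _ _)]
  simp only [Real.sin_pi, Real.cos_pi, Real.sin_zero, Real.cos_zero]
  ring



lemma outer_int (a1 b1 q v w : ℝ) :
    (∫ x in (0 : ℝ)..(2 * π), ((4 : ℝ)/5) * (-a1 + b1 * (2 * Real.cos x ^ 2 - 1)) * (v * Real.cos x + w * Real.sin x) ^ 2 + (2 : ℝ) * (-a1 + b1 * (2 * Real.cos x ^ 2 - 1)) ^ 3 + ((3 : ℝ)/4) * q * (-a1 + b1 * (2 * Real.cos x ^ 2 - 1)) * (v * Real.cos x + w * Real.sin x) * π + (2 : ℝ) * q ^ 2 * (-a1 + b1 * (2 * Real.cos x ^ 2 - 1)) + ((12 : ℝ)/35) * (3 * a1 - b1 * (2 * Real.cos x ^ 2 - 1)) * (v * Real.cos x + w * Real.sin x) ^ 2 + (2 : ℝ) * (3 * a1 - b1 * (2 * Real.cos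 x ^ 2 - 1)) * (-a1 + b1 * (2 * Real.cos x ^ 2 - 1)) ^ 2 + ((3 : ℝ)/8) * (3 * a1 - b1 * (2 * Real.cos x ^ 2 - 1)) * q * (v * Real.cos x + w * Real.sin x) * π + ((6 : ℝ)/5) * (3 * a1 - b1 * (2 * Real.cos x ^ 2 - 1)) * q ^ 2 + ((6 : ℝ)/5) * (3 * a1 - b1 * (2 * Real.cos x ^ 2 - 1)) ^ 2 * (-a1 + b1 * (2 * Real.cos x ^ 2 - 1)) + ((2 : ℝ)/7) * (3 * a1 - b1 * (2 * Real.cos x ^ 2 - 1)) ^ 3)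
      = ((-8 : ℝ)/35) * b1 * w ^ 2 * π + ((8 : ℝ)/35) * b1 * v ^ 2 * π + ((8 : ℝ)/35) * a1 * w ^ 2 * π + ((8 : ℝ)/35) * a1 * v ^ 2 * π + ((16 : ℝ)/5) * a1 * q ^ 2 * π + ((-64 : ℝ)/35) * a1 * b1 ^ 2 * π + ((64 : ℝ)/35) * a1 ^ 3 * π := by
  have hd : ∀ x ∈ Set.uIcc (0 : ℝ) (2 * π),
      HasDerivAt (fun x => (((3 : ℝ)/8) * b1 * q * w * π + ((-3 : ℝ)/8) * a1 * q * w * π) * (Real.cos x) + (((16 : ℝ)/35) * b1 * v * w + ((-8 : ℝ)/35) * a1 * v * w) * (Real.cos x ^ 2) + (((-1 : ℝ)/4) * b1 * q * w * π) * (Real.cos x ^ 3) + (((-16 : ℝ)/35) * b1 * v * w) * (Real.cos x ^ 4) + (((1 : ℝ)/8) * b1 * q * v * π + ((3 : ℝ)/8) * a1 * q * v * π) * (Real.sin x) + (((12 : ℝ)/35) * b1 * w ^ 2 + ((4 : ℝ)/35) * b1 * v ^ 2 + ((4 : ℝ)/5) * b1 * q ^ 2 + ((32 : ℝ)/35) *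 b1 ^ 3 + ((-4 : ℝ)/35) * a1 * w ^ 2 + ((4 : ℝ)/35) * a1 * v ^ 2 + ((32 : ℝ)/35) * a1 * b1 ^ 2 + ((16 : ℝ)/7) * a1 ^ 2 * b1) * (Real.sin x * Real.cos x) + (((1 : ℝ)/4) * b1 * q * v * π) * (Real.sin x * Real.cos x ^ 2) + (((-8 : ℝ)/35) * b1 * w ^ 2 + ((8 : ℝ)/35) * b1 * v ^ 2 + ((-128 : ℝ)/105) * b1 ^ 3 + ((-64 : ℝ)/35) * a1 * b1 ^ 2) * (Real.sin x * Real.cos x ^ 3) + (((128 : ℝ)/105) * b1 ^ 3) * (Real.sin x * Real.cos x ^ 5) + (((-4 : ℝ)/35) * b1 * w ^ 2 + ((4 : ℝ)/35) * b1 * v ^ 2 + ((4 : ℝ)/35) * a1 * w ^ 2 + ((4 : ℝ)/35) * a1 * v ^ 2 + ((8 : ℝ)/5) * a1 * q ^ 2 + ((-32 : ℝ)/35) * a1 * b1 ^ 2 + ((32 : ℝ)/35) * a1 ^ 3) * (x))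
        (((4 : ℝ)/5) * (-a1 + b1 * (2 * Real.cos x ^ 2 - 1)) * (v * Real.cos x + w * Real.sin x) ^ 2 + (2 : ℝ) * (-a1 + b1 * (2 * Real.cos x ^ 2 - 1)) ^ 3 + ((3 : ℝ)/4) * q * (-a1 + b1 * (2 * Real.cos x ^ 2 - 1)) * (v * Real.cos x + w * Real.sin x) * π + (2 : ℝ) * q ^ 2 * (-a1 + b1 * (2 * Real.cos x ^ 2 - 1)) + ((12 : ℝ)/35) * (3 * a1 - b1 * (2 * Real.cos x ^ 2 - 1)) * (v * Real.cos x + w * Real.sin x) ^ 2 + (2 : ℝ) * (3 * a1 - b1 * (2 * Real.cos x ^ 2 - 1)) * (-a1 + b1 * (2 * Real.cos x ^ 2 - 1)) ^ 2 + ((3 : ℝ)/8) * (3 * a1 - b1 * (2 * Real.cos x ^ 2 - 1)) * q * (v * Real.cos x + w * Real.sin x) * π + ((6 : ℝ)/5) * (3 * a1 - b1 * (2 * Real.cos x ^ 2 - 1)) * q ^ 2 + ((6 : ℝ)/5) * (3 * a1 - b1 * (2 * Real.cos x ^ 2 - 1)) ^ 2 * (-a1 + b1 * (2 * Real.cos x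 ^ 2 - 1)) + ((2 : ℝ)/7) * (3 * a1 - b1 * (2 * Real.cos x ^ 2 - 1)) ^ 3) x := by
    intro x _
    have h0 := (((((((((((Real.hasDerivAt_cos x).const_mul (((3 : ℝ)/8) * b1 * q * w * π + ((-3 : ℝ)/8) * a1 * q * w * π)).add (((Real.hasDerivAt_cos x).pow 2).const_mul (((16 : ℝ)/35) * b1 * v * w + ((-8 : ℝ)/35) * a1 * v * w))).add (((Real.hasDerivAt_cos x).pow 3).const_mul (((-1 : ℝ)/4) * b1 * q * w * π))).add (((Real.hasDerivAt_cos x).pow 4).const_mul (((-16 : ℝ)/35) * b1 * v * w))).add ((Real.hasDerivAt_sin x).const_mul (((1 : ℝ)/8) * b1 * q * v * π + ((3 : ℝ)/8) * a1 * q * v * π))).add (((Real.hasDerivAt_sin x).mul (Real.hasDerivAt_cos x)).const_mul (((12 : ℝ)/35) * b1 * w ^ 2 + ((4 : ℝ)/35) * b1 * v ^ 2 + ((4 : ℝ)/5) * b1 * q ^ 2 + ((32 : ℝ)/35) * b1 ^ 3 + ((-4 : ℝ)/35) * a1 * w ^ 2 + ((4 : ℝ)/35) * a1 * v ^ 2 +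 ((32 : ℝ)/35) * a1 * b1 ^ 2 + ((16 : ℝ)/7) * a1 ^ 2 * b1))).add (((Real.hasDerivAt_sin x).mul ((Real.hasDerivAt_cos x).pow 2)).const_mul (((1 : ℝ)/4) * b1 * q * v * π))).add (((Real.hasDerivAt_sin x).mul ((Real.hasDerivAt_cos x).pow 3)).const_mul (((-8 : ℝ)/35) * b1 * w ^ 2 + ((8 : ℝ)/35) * b1 * v ^ 2 + ((-128 : ℝ)/105) * b1 ^ 3 + ((-64 : ℝ)/35) * a1 * b1 ^ 2))).add (((Real.hasDerivAt_sin x).mul ((Real.hasDerivAt_cos x).pow 5)).const_mul (((128 : ℝ)/105) * b1 ^ 3))).add ((hasDerivAt_id x).const_mul (((-4 : ℝ)/35) * b1 * w ^ 2 + ((4 : ℝ)/35) * b1 * v ^ 2 + ((4 : ℝ)/35) * a1 * w ^ 2 + ((4 : ℝ)/35) * a1 * v ^ 2 + ((8 : ℝ)/5) * a1 * q ^ 2 + ((-32 : ℝ)/35) * a1 * b1 ^ 2 + ((32 : ℝ)/35) * a1 ^ 3)))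
    refine HasDerivAt.congr_deriv h0 (Eq.symm ?_)
    push_cast [Pi.pow_apply]
    linear_combination (((-4 : ℝ)/35) * b1 * w ^ 2 + ((8 : ℝ)/35) * b1 * w ^ 2 * Real.cos x ^ 2 + ((4 : ℝ)/35) * b1 * v ^ 2 + ((24 : ℝ)/35) * b1 * v ^ 2 * Real.cos x ^ 2 + ((1 : ℝ)/2) * b1 * q * v * π * Real.cos x + ((4 : ℝ)/5) * b1 * q ^ 2 + ((32 : ℝ)/35) * b1 ^ 3 + ((-128 : ℝ)/35) * b1 ^ 3 * Real.cos x ^ 2 + ((128 : ℝ)/21) * b1 ^ 3 * Real.cos x ^ 4 + ((4 : ℝ)/35) * a1 * w ^ 2 + ((4 : ℝ)/35) * a1 * v ^ 2 + ((32 : ℝ)/35) * a1 * b1 ^ 2 + ((-192 : ℝ)/35) * a1 * b1 ^ 2 * Real.cos x ^ 2 + ((16 : ℝ)/7) * a1 ^ 2 * b1) * Real.sin_sq_add_cos_sq x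
  rw [intervalIntegral.integral_eq_sub_of_hasDerivAt hd (Continuous.intervalIntegrable (by fun_prop) _ _)]
  simp only [Real.sin_two_pi, Real.cos_two_pi, Real.sin_zero, Real.cos_zero]
  ring


/-- **The cubic Casimir `C₃` of `Ω cosθ + A Y_{2,0} + B Y_{2,1} + C Y_{2,−1} + D Y_{2,2}`.** -/
theorem stmt11 (Ω A B C D : ℝ) :
    (∫ φ in (0:ℝ)..(2 * π), ∫ θ in (0:ℝ)..π,
      (vort Ω A B C D θ φ) ^ 3 * Real.sin θ) =
    (10 * A ^ 3 + 15 * Real.sqrt 3 * (B - C) * (B + C) * D +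
      15 * A * (B ^ 2 + C ^ 2 - 2 * D ^ 2) + 56 * A * Ω ^ 2 * π) /
    (14 * Real.sqrt (5 * π)) := by
  have h1 : ∀ φ : ℝ, (∫ θ in (0:ℝ)..π, (vort Ω A B C D θ φ) ^ 3 * Real.sin θ)
      = ((4 : ℝ)/5) * (-(A * Real.sqrt (5 / (16 * π))) + (D * Real.sqrt (15 / (16 * π))) * (2 * Real.cos φ ^ 2 - 1)) * ((2 * (B * Real.sqrt (15 / (16 * π)))) * Real.cos φ + (2 * (C * Real.sqrt (15 / (16 * π)))) * Real.sin φ) ^ 2 + (2 : ℝ) * (-(A * Real.sqrt (5 / (16 * π))) + (D * Real.sqrt (15 / (16 * π))) * (2 * Real.cos φ ^ 2 - 1)) ^ 3 + ((3 : ℝ)/4) * Ω * (-(A * Real.sqrt (5 / (16 * π))) + (D * Real.sqrt (15 / (16 * π))) * (2 * Real.cos φ ^ 2 - 1)) * ((2 * (B * Real.sqrt (15 / (16 * π)))) * Real.cos φ + (2 * (C * Real.sqrt (15 / (16 * π)))) * Real.sin φ) * π + (2 : ℝ) * Ω ^ 2 * (-(A * Real.sqrt (5 / (16 * π))) + (D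 * Real.sqrt (15 / (16 * π))) * (2 * Real.cos φ ^ 2 - 1)) + ((12 : ℝ)/35) * (3 * (A * Real.sqrt (5 / (16 * π))) - (D * Real.sqrt (15 / (16 * π))) * (2 * Real.cos φ ^ 2 - 1)) * ((2 * (B * Real.sqrt (15 / (16 * π)))) * Real.cos φ + (2 * (C * Real.sqrt (15 / (16 * π)))) * Real.sin φ) ^ 2 + (2 : ℝ) * (3 * (A * Real.sqrt (5 / (16 * π))) - (D * Real.sqrt (15 / (16 * π))) * (2 * Real.cos φ ^ 2 - 1)) * (-(A * Real.sqrt (5 / (16 * π))) + (D * Real.sqrt (15 / (16 * π))) * (2 * Real.cos φ ^ 2 - 1)) ^ 2 + ((3 : ℝ)/8) * (3 * (A * Real.sqrt (5 / (16 * π))) - (D * Real.sqrt (15 / (16 * π))) * (2 * Real.cos φ ^ 2 - 1)) * Ω * ((2 * (B * Real.sqrt (15 / (16 * π)))) * Real.cos φ + (2 * (C * Real.sqrt (15 / (16 * π)))) * Real.sin φ) * π + ((6 : ℝ)/5) * (3 * (A * Real.sqrt (5 / (16 * π))) - (D * Real.sqrt (15 / (16 * π))) * (2 * Real.cos φ ^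 2 - 1)) * Ω ^ 2 + ((6 : ℝ)/5) * (3 * (A * Real.sqrt (5 / (16 * π))) - (D * Real.sqrt (15 / (16 * π))) * (2 * Real.cos φ ^ 2 - 1)) ^ 2 * (-(A * Real.sqrt (5 / (16 * π))) + (D * Real.sqrt (15 / (16 * π))) * (2 * Real.cos φ ^ 2 - 1)) + ((2 : ℝ)/7) * (3 * (A * Real.sqrt (5 / (16 * π))) - (D * Real.sqrt (15 / (16 * π))) * (2 * Real.cos φ ^ 2 - 1)) ^ 3 := by
    intro φ
    rw [intervalIntegral.integral_congr (g := fun θ => ((3 * (A * Real.sqrt (5 / (16 * π))) - (D * Real.sqrt (15 / (16 * π))) * (2 * Real.cos φ ^ 2 - 1)) * Real.cos θ ^ 2 + Ω * Real.cos θ + (-(A * Real.sqrt (5 / (16 * π))) + (D * Real.sqrt (15 / (16 * π))) * (2 * Real.cos φ ^ 2 - 1)) + ((2 * (B * Real.sqrt (15 / (16 * π)))) * Real.cos φ + (2 * (C * Real.sqrt (15 / (16 * π)))) * Real.sin φ) * Real.sin θ * Real.cos θ) ^ 3 * Real.sin θ)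
      (fun θ _ => by simp only [vort, Real.sin_two_mul, Real.cos_two_mul, Real.sin_sq]; ring)]
    exact inner_int _ _ _ _
  rw [intervalIntegral.integral_congr (fun φ _ => h1 φ),
    outer_int (A * Real.sqrt (5 / (16 * π))) (D * Real.sqrt (15 / (16 * π))) Ω
      (2 * (B * Real.sqrt (15 / (16 * π)))) (2 * (C * Real.sqrt (15 / (16 * π))))]
  have hb : Real.sqrt (15 / (16 * π)) = Real.sqrt 3 * Real.sqrt (5 / (16 * π)) := by
    rw [show (15:ℝ) / (16 * π) = 3 * (5 / (16 * π)) by ring,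
      Real.sqrt_mul (by norm_num : (0:ℝ) ≤ 3)]
  have ha2 : 16 * π * Real.sqrt (5 / (16 * π)) ^ 2 = 5 := by
    rw [Real.sq_sqrt (by positivity : (0:ℝ) ≤ 5 / (16 * π))]
    field_simp
  have h3 : Real.sqrt 3 ^ 2 = 3 := Real.sq_sqrt (by norm_num)
  have h5π : Real.sqrt (5 * π) = 4 * π * Real.sqrt (5 / (16 * π)) := by
    have h : (5:ℝ) * π = (5 / (16 * π)) * (4 * π) ^ 2 := by
      field_simp
      ring
    rw [h, Real.sqrt_mul (by positivity), Real.sqrt_sq (by positivity)]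
    ring
  rw [hb, h5π, eq_div_iff (by positivity)]
  set a := Real.sqrt (5 / (16 * π)) with hadef
  set t := Real.sqrt 3 with htdef
  linear_combination ((2 : ℝ) * A ^ 3 + ((56 : ℝ)/5) * π * A * Ω ^ 2 + (-2 : ℝ) * t ^ 2 * A * D ^ 2 + (1 : ℝ) * t ^ 2 * A * C ^ 2 + (1 : ℝ) * t ^ 2 * A * B ^ 2 + (-1 : ℝ) * t ^ 3 * C ^ 2 * D + (1 : ℝ) * t ^ 3 * B ^ 2 * D + ((32 : ℝ)/5) * a ^ 2 * π * A ^ 3 + ((-32 : ℝ)/5) * a ^ 2 * t ^ 2 * π * A * D ^ 2 + ((16 : ℝ)/5) * a ^ 2 * t ^ 2 * π * A * C ^ 2 + ((16 : ℝ)/5) * a ^ 2 * t ^ 2 * π * A * B ^ 2 + ((-16 : ℝ)/5) * a ^ 2 * t ^ 3 * π * C ^ 2 * D + ((16 : ℝ)/5) * a ^ 2 * t ^ 3 * π * B ^ 2 * D) * ha2 + ((-10 : ℝ) * A * D ^ 2 + (5 : ℝ) * A * C ^ 2 + (5 : ℝ) * A * B ^ 2 + (-5 : ℝ) * t * C ^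 2 * D + (5 : ℝ) * t * B ^ 2 * D) * h3
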